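/- Let G be a connected graph on vertex set {1,...,n} with n ≥ 2 and Φ = (F_1,...,F_n) where every F_i has an isolated vertex and |V(F_i)| ≥ 2. Then a set T is a minimal total dominating set of G[Φ] if and only if T is a minimal total dominating set of the subgraph induced by some G-layer of G[Φ]. In particular Γ_t(G) = Γ_t(G[Φ]) and: G[Φ] is well γ_t-dominated if and only if G is well γ_t-dominated. -/

import Mathlib

open scoped Classical

/-- A dominating set: every vertex is in `D` or adjacent to a vertex of `D`. -/
def isDominatingSet {V : Type*} (H : SimpleGraph V) (D : Finset V) : Prop :=
  ∀ v : V, v ∈ D ∨ ∃ u ∈ D, H.Adj u v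

/-- A total dominating set: every vertex has a neighbor in `D`. -/
def isTotalDominatingSet {V : Type*} (H : SimpleGraph V) (D : Finset V) : Prop :=
  ∀ v : V, ∃ u ∈ D, H.Adj u v

def isMinimalDominatingSet {V : Type*} (H : SimpleGraph V) (D : Finset V) : Prop :=
  isDominatingSet H D ∧ ∀ D' : Finset V, D' ⊂ D → ¬ isDominatingSet H D'

def isMinimalTotalDominatingSet {V : Type*} (H : SimpleGraph V) (D : Finset V) : Prop :=
  isTotalDominatingSet H D ∧ ∀ D' : Finset V, D' ⊂ D → ¬ isTotalDominatingSet H D'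

noncomputable def domNum {V : Type*} (H : SimpleGraph V) : ℕ :=
  sInf {k | ∃ D : Finset V, isDominatingSet H D ∧ D.card = k}

noncomputable def totalDomNum {V : Type*} (H : SimpleGraph V) : ℕ :=
  sInf {k | ∃ D : Finset V, isTotalDominatingSet H D ∧ D.card = k}

noncomputable def upperDomNum {V : Type*} (H : SimpleGraph V) : ℕ :=
  sSup {k | ∃ D : Finset V, isMinimalDominatingSet H D ∧ D.card = k}

noncomputable def upperTotalDomNum {V : Type*} (H : SimpleGraph V) : ℕ :=
  sSup {k | ∃ D : Finset V, isMinimalTotalDominatingSet H D ∧ D.card = k}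

/-- Well (γ-)dominated: all minimal dominating sets have the same size. -/
def WellDominated {V : Type*} (H : SimpleGraph V) : Prop :=
  ∀ D₁ D₂ : Finset V, isMinimalDominatingSet H D₁ → isMinimalDominatingSet H D₂ →
    D₁.card = D₂.card

/-- Well γ_t-dominated: all minimal total dominating sets have the same size. -/
def WellTotalDominated {V : Type*} (H : SimpleGraph V) : Prop :=
  ∀ D₁ D₂ : Finset V, isMinimalTotalDominatingSet H D₁ → isMinimalTotalDominatingSet H D₂ →
    D₁.card = D₂.card

/-- Restrained dominating set: dominating and every vertex outside `D` has a
neighbor outside `D`. -/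
def isRestrainedDominatingSet {V : Type*} (H : SimpleGraph V) (D : Finset V) : Prop :=
  isDominatingSet H D ∧ ∀ v ∉ D, ∃ u ∉ D, H.Adj u v

/-- Outer-connected dominating set: dominating and the subgraph induced by the
complement of `D` is connected. -/
def isOuterConnectedDominatingSet {V : Type*} (H : SimpleGraph V) (D : Finset V) : Prop :=
  isDominatingSet H D ∧ (H.induce ((↑D : Set V)ᶜ)).Connected

def isTotalRestrainedDominatingSet {V : Type*} (H : SimpleGraph V) (D : Finset V) : Prop :=
  isTotalDominatingSet H D ∧ ∀ v ∉ D, ∃ u ∉ D, H.Adj u v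

def isTotalOuterConnectedDominatingSet {V : Type*} (H : SimpleGraph V) (D : Finset V) : Prop :=
  isTotalDominatingSet H D ∧ (H.induce ((↑D : Set V)ᶜ)).Connected

noncomputable def restrainedDomNum {V : Type*} (H : SimpleGraph V) : ℕ :=
  sInf {k | ∃ D : Finset V, isRestrainedDominatingSet H D ∧ D.card = k}

noncomputable def ocDomNum {V : Type*} (H : SimpleGraph V) : ℕ :=
  sInf {k | ∃ D : Finset V, isOuterConnectedDominatingSet H D ∧ D.card = k}

noncomputable def totalRestrainedDomNum {V : Type*} (H : SimpleGraph V) : ℕ :=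
  sInf {k | ∃ D : Finset V, isTotalRestrainedDominatingSet H D ∧ D.card = k}

noncomputable def totalOcDomNum {V : Type*} (H : SimpleGraph V) : ℕ :=
  sInf {k | ∃ D : Finset V, isTotalOuterConnectedDominatingSet H D ∧ D.card = k}

/-- Paired dominating set: dominating and the induced subgraph on `D` has a
perfect matching. -/
def isPairedDominatingSet {V : Type*} (H : SimpleGraph V) (D : Finset V) : Prop :=
  isDominatingSet H D ∧
    ∃ M : SimpleGraph.Subgraph (H.induce (↑D : Set V)), M.IsPerfectMatching

noncomputable def pairedDomNum {V : Type*} (H : SimpleGraph V) : ℕ :=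
  sInf {k | ∃ D : Finset V, isPairedDominatingSet H D ∧ D.card = k}

def isIndependentSet {V : Type*} (H : SimpleGraph V) (D : Finset V) : Prop :=
  ∀ u ∈ D, ∀ v ∈ D, ¬ H.Adj u v

def isMaximalIndependentSet {V : Type*} (H : SimpleGraph V) (D : Finset V) : Prop :=
  isIndependentSet H D ∧ ∀ D' : Finset V, D ⊂ D' → ¬ isIndependentSet H D'

/-- The independent domination number `i(H)`. -/
noncomputable def indepDomNum {V : Type*} (H : SimpleGraph V) : ℕ :=
  sInf {k | ∃ D : Finset V, isMaximalIndependentSet H D ∧ D.card = k}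

/-- The independence number `β₀(H)`. -/
noncomputable def indepNum {V : Type*} (H : SimpleGraph V) : ℕ :=
  sSup {k | ∃ D : Finset V, isIndependentSet H D ∧ D.card = k}

/-- An efficient dominating set: every vertex is dominated by exactly one
member of `D`. -/
def isEfficientDominatingSet {V : Type*} (H : SimpleGraph V) (D : Finset V) : Prop :=
  ∀ v : V, ∃! u : V, u ∈ D ∧ (u = v ∨ H.Adj u v)

/-- The generalized lexicographic product `G[Φ]` of a graph `G` on `Fin n` and a
family `Φ = (F 0, …, F (n-1))` of pairwise disjoint graphs: the `F i` are induced
subgraphs, and vertices in distinct `F i`, `F j` are adjacent iff `i j ∈ E(G)`. -/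
def GLP {n : ℕ} (G : SimpleGraph (Fin n)) {V : Fin n → Type*}
    (F : ∀ i, SimpleGraph (V i)) : SimpleGraph (Σ i, V i) where
  Adj x y := (x.1 ≠ y.1 ∧ G.Adj x.1 y.1) ∨ ∃ h : x.1 = y.1, (F y.1).Adj (h ▸ x.2) y.2
  symm := by
    refine ⟨?_⟩
    rintro ⟨i, a⟩ ⟨j, b⟩ (⟨hne, hadj⟩ | ⟨h, hadj⟩)
    · exact Or.inl ⟨fun hh => hne hh.symm, hadj.symm⟩
    · dsimp only at h
      subst h
      exact Or.inr ⟨rfl, hadj.symm⟩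
  loopless := by
    refine ⟨?_⟩
    rintro ⟨i, a⟩ (⟨hne, _⟩ | ⟨h, hadj⟩)
    · exact hne rfl
    · exact (F i).loopless.irrefl a hadj

/-- The number of vertices of `D ∩ V(F i)`. -/
noncomputable def layerCount {n : ℕ} {V : Fin n → Type*} [∀ i, Fintype (V i)]
    (D : Finset (Σ i, V i)) (i : Fin n) : ℕ :=
  (D.filter (fun x => x.1 = i)).card

section Aux

variable {n : ℕ} {V : Fin n → Type}

lemma tds_mono {W : Type*} (H : SimpleGraph W) {D D' : Finset W} (h : D ⊆ D')
    (hD : isTotalDominatingSet H D) : isTotalDominatingSet H D' := by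
  intro v
  obtain ⟨u, hu, ha⟩ := hD v
  exact ⟨u, h hu, ha⟩

lemma glp_tds_iff (G : SimpleGraph (Fin n)) (F : ∀ i, SimpleGraph (V i))
    (hiso : ∀ i, ∃ a : V i, ∀ b : V i, ¬ (F i).Adj a b) (T : Finset (Σ i, V i)) :
    isTotalDominatingSet (GLP G F) T ↔ isTotalDominatingSet G (T.image Sigma.fst) := by
  constructor
  · intro h i
    obtain ⟨a, ha⟩ := hiso i
    obtain ⟨x, hxT, hadj⟩ := h ⟨i, a⟩
    rcases hadj with ⟨hne, hadj⟩ | ⟨he, hadj⟩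
    · exact ⟨x.1, Finset.mem_image_of_mem _ hxT, hadj⟩
    · exact ((ha _) hadj.symm).elim
  · intro h v
    obtain ⟨j, hjS, hadj⟩ := h v.1
    obtain ⟨x, hxT, rfl⟩ := Finset.mem_image.mp hjS
    exact ⟨x, hxT, Or.inl ⟨G.ne_of_adj hadj, hadj⟩⟩

lemma glp_layer_inj (G : SimpleGraph (Fin n)) (F : ∀ i, SimpleGraph (V i))
    (hiso : ∀ i, ∃ a : V i, ∀ b : V i, ¬ (F i).Adj a b) {T : Finset (Σ i, V i)}
    (hT : isMinimalTotalDominatingSet (GLP G F) T) :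
    ∀ x ∈ T, ∀ y ∈ T, x.1 = y.1 → x = y := by
  intro x hx y hy h1
  by_contra hne
  apply hT.2 (T.erase x) (Finset.erase_ssubset hx)
  have h1' := (glp_tds_iff G F hiso T).mp hT.1
  rw [glp_tds_iff G F hiso]
  refine tds_mono G ?_ h1'
  intro j hj
  obtain ⟨z, hz, rfl⟩ := Finset.mem_image.mp hj
  by_cases hzx : z = x
  · subst hzx
    exact Finset.mem_image.mpr ⟨y, Finset.mem_erase.mpr ⟨fun h => hne h.symm, hy⟩, h1.symm⟩
  · exact Finset.mem_image.mpr ⟨z, Finset.mem_erase.mpr ⟨hzx, hz⟩, rfl⟩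

lemma sigma_mk_inj (u : ∀ i, V i) :
    Function.Injective (fun i => (⟨i, u i⟩ : Σ i, V i)) :=
  fun a b h => congrArg Sigma.fst h

lemma glp_min_iff (G : SimpleGraph (Fin n)) (F : ∀ i, SimpleGraph (V i))
    (hiso : ∀ i, ∃ a : V i, ∀ b : V i, ¬ (F i).Adj a b)
    (hne : ∀ i, Nonempty (V i)) (T : Finset (Σ i, V i)) :
    isMinimalTotalDominatingSet (GLP G F) T ↔
      ∃ (u : ∀ i, V i) (S : Finset (Fin n)),
        isMinimalTotalDominatingSet G S ∧
        T = S.image (fun i => (⟨i, u i⟩ : Σ i, V i)) := by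
  constructor
  · intro hT
    have hinj := glp_layer_inj G F hiso hT
    have key : ∀ i, ∃ v : V i, (⟨i, v⟩ : Σ i, V i) ∈ T ∨ ¬ ∃ x ∈ T, x.1 = i := by
      intro i
      by_cases h : ∃ x ∈ T, x.1 = i
      · obtain ⟨x, hx, h1⟩ := h
        subst h1
        exact ⟨x.2, Or.inl hx⟩
      · exact ⟨(hne i).some, Or.inr h⟩
    choose u hu using key
    have hmemf : ∀ z ∈ T, (⟨z.1, u z.1⟩ : Σ i, V i) = z := by
      intro z hz
      rcases hu z.1 with h | h
      · exact hinj _ h _ hz rfl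
      · exact absurd ⟨z, hz, rfl⟩ h
    have hTeq : T = (T.image Sigma.fst).image (fun i => (⟨i, u i⟩ : Σ i, V i)) := by
      ext z
      simp only [Finset.mem_image]
      constructor
      · intro hz
        exact ⟨z.1, ⟨z, hz, rfl⟩, hmemf z hz⟩
      · rintro ⟨i, ⟨x, hx, rfl⟩, rfl⟩
        rw [hmemf x hx]
        exact hx
    refine ⟨u, T.image Sigma.fst, ⟨(glp_tds_iff G F hiso T).mp hT.1, ?_⟩, hTeq⟩
    intro S' hS' hS'tds
    refine hT.2 (S'.image (fun i => (⟨i, u i⟩ : Σ i, V i))) ?_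
      ((glp_tds_iff G F hiso _).mpr ?_)
    · have hsub : S'.image (fun i => (⟨i, u i⟩ : Σ i, V i)) ⊆ T := by
        rw [hTeq]
        exact Finset.image_subset_image hS'.subset
      have hcard : (S'.image (fun i => (⟨i, u i⟩ : Σ i, V i))).card < T.card := by
        rw [hTeq, Finset.card_image_of_injective _ (sigma_mk_inj u),
          Finset.card_image_of_injective _ (sigma_mk_inj u)]
        exact Finset.card_lt_card hS'
      exact Finset.ssubset_iff_subset_ne.mpr ⟨hsub, fun h => by simp [h] at hcard⟩
    · have : (S'.image (fun i => (⟨i, u i⟩ : Σ i, V i))).image Sigma.fst = S' := by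
        ext j; simp
      rw [this]
      exact hS'tds
  · rintro ⟨u, S, ⟨hStds, hSmin⟩, rfl⟩
    have himg : (S.image (fun i => (⟨i, u i⟩ : Σ i, V i))).image Sigma.fst = S := by
      ext j; simp
    constructor
    · rw [glp_tds_iff G F hiso, himg]
      exact hStds
    · intro T' hT' hT'tds
      have hS' := (glp_tds_iff G F hiso T').mp hT'tds
      refine hSmin (T'.image Sigma.fst) ?_ hS'
      have hsub : T'.image Sigma.fst ⊆ S := by
        rw [← himg]
        exact Finset.image_subset_image hT'.subset
      have hcard : (T'.image Sigma.fst).card < S.card := by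
        calc (T'.image Sigma.fst).card ≤ T'.card := Finset.card_image_le
        _ < (S.image (fun i => (⟨i, u i⟩ : Σ i, V i))).card := Finset.card_lt_card hT'
        _ = S.card := Finset.card_image_of_injective _ (sigma_mk_inj u)
      exact Finset.ssubset_iff_subset_ne.mpr ⟨hsub, fun h => by simp [h] at hcard⟩

end Aux

/-- If every `F i` has an isolated vertex and `|V(F i)| ≥ 2`, then `T` is a
minimal total dominating set of `G[Φ]` iff `T` is (via the canonical
isomorphism) a minimal total dominating set of some `G`-layer; in particular
`Γ_t(G) = Γ_t(G[Φ])` and `G[Φ]` is well `γ_t`-dominated iff `G` is. -/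
theorem stmt_17 {n : ℕ} (hn : 2 ≤ n) (G : SimpleGraph (Fin n)) (hG : G.Connected)
    (V : Fin n → Type) [∀ i, Fintype (V i)] (F : ∀ i, SimpleGraph (V i))
    (hiso : ∀ i, ∃ a : V i, ∀ b : V i, ¬ (F i).Adj a b)
    (hV : ∀ i, 2 ≤ Fintype.card (V i)) :
    (∀ T : Finset (Σ i, V i),
      isMinimalTotalDominatingSet (GLP G F) T ↔
        ∃ (u : ∀ i, V i) (S : Finset (Fin n)),
          isMinimalTotalDominatingSet G S ∧
          T = S.image (fun i => (⟨i, u i⟩ : Σ i, V i))) ∧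
    upperTotalDomNum G = upperTotalDomNum (GLP G F) ∧
    (WellTotalDominated (GLP G F) ↔ WellTotalDominated G) := by
  have hne : ∀ i, Nonempty (V i) := fun i =>
    Fintype.card_pos_iff.mp (by have := hV i; omega)
  have main := fun T => glp_min_iff G F hiso hne T
  refine ⟨main, ?_, ?_⟩
  · unfold upperTotalDomNum
    congr 1
    ext k
    simp only [Set.mem_setOf_eq]
    constructor
    · rintro ⟨D, hD, rfl⟩
      refine ⟨D.image (fun i => (⟨i, (hne i).some⟩ : Σ i, V i)),
        (main _).mpr ⟨fun i => (hne i).some, D, hD, rfl⟩, ?_⟩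
      exact Finset.card_image_of_injective _ (sigma_mk_inj _)
    · rintro ⟨T, hT, rfl⟩
      obtain ⟨u, S, hS, rfl⟩ := (main T).mp hT
      exact ⟨S, hS, (Finset.card_image_of_injective _ (sigma_mk_inj u)).symm⟩
  · constructor
    · intro h D1 D2 h1 h2
      have := h (D1.image (fun i => (⟨i, (hne i).some⟩ : Σ i, V i)))
        (D2.image (fun i => (⟨i, (hne i).some⟩ : Σ i, V i)))
        ((main _).mpr ⟨fun i => (hne i).some, D1, h1, rfl⟩)
        ((main _).mpr ⟨fun i => (hne i).some, D2, h2, rfl⟩)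
      rwa [Finset.card_image_of_injective _ (sigma_mk_inj _),
        Finset.card_image_of_injective _ (sigma_mk_inj _)] at this
    · intro h T1 T2 h1 h2
      obtain ⟨u1, S1, hS1, rfl⟩ := (main T1).mp h1
      obtain ⟨u2, S2, hS2, rfl⟩ := (main T2).mp h2
      rw [Finset.card_image_of_injective _ (sigma_mk_inj u1),
        Finset.card_image_of_injective _ (sigma_mk_inj u2)]
      exact h S1 S2 hS1 hS2
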